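/- For the connection d + G on the trivial rank-2 bundle with G = [[0,0],[ω, du/(2u)+dv/(2v)]], ω = (udv-vdu)/(uv(u+v)), the pullback along the curve u = s, v = νs² (ν ≠ 0) has connection matrix [[0,0],[ds/(s²(1+νs)), (3/2)ds/s]], which has a pole of order 2 at s = 0. -/
import Mathlib


/-- the pullback of the connection matrix
`G = [[0,0],[ω, du/(2u)+dv/(2v)]]`, `ω = (u·dv - v·du)/(uv(u+v))`, along the
curve `u = s`, `v = ν·s²` (ν ≠ 0) is `[[0,0],[ds/(s²(1+νs)), (3/2)·ds/s]]`,
which has a pole of order 2 at `s = 0`. Formalized for any derivation `d` on a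
characteristic-zero field `F` (such as `K(s)`), `ν` a nonzero constant; the
pullback substitutes `u = s`, `v = ν·s²` in each entry. -/
theorem stmt15 (F : Type*) [Field F] [CharZero F]
    (Ω : Type*) [AddCommGroup Ω] [Module F Ω]
    (d : Derivation ℤ F Ω)
    (s ν : F) (hs : s ≠ 0) (hν : ν ≠ 0) (hνs : 1 + ν * s ≠ 0) (hconst : d ν = 0)
    (Gsub : Matrix (Fin 2) (Fin 2) Ω)
    (hGsub : Gsub = !![0, 0;
      (s * (ν * s ^ 2) * (s + ν * s ^ 2))⁻¹ •
        (s • d (ν * s ^ 2) - (ν * s ^ 2) • d s),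
      (2 * s)⁻¹ • d s + (2 * (ν * s ^ 2))⁻¹ • d (ν * s ^ 2)]) :
    Gsub = !![0, 0;
      (s ^ 2 * (1 + ν * s))⁻¹ • d s, (3 / (2 * s)) • d s] := by
  have hd : d (ν * s ^ 2) = (2 * (ν * s)) • d s := by
    rw [Derivation.leibniz, hconst, smul_zero, add_zero, pow_two, Derivation.leibniz]
    module
  have hfac : s + ν * s ^ 2 = s * (1 + ν * s) := by ring
  have hne : s * (ν * s ^ 2) * (s * (1 + ν * s)) ≠ 0 := by
    apply mul_ne_zero (mul_ne_zero hs (mul_ne_zero hν (pow_ne_zero 2 hs)))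
    exact mul_ne_zero hs hνs
  have e1 : (s * (ν * s ^ 2) * (s + ν * s ^ 2))⁻¹ •
      (s • ((2 * (ν * s)) • d s) - (ν * s ^ 2) • d s)
      = (s ^ 2 * (1 + ν * s))⁻¹ • d s := by
    rw [smul_smul, ← sub_smul, smul_smul, hfac]
    congr 1
    rw [inv_mul_eq_div, div_eq_iff hne, inv_mul_eq_div,
      eq_div_iff (mul_ne_zero (pow_ne_zero 2 hs) hνs)]
    ring
  have e2 : (2 * s)⁻¹ • d s + (2 * (ν * s ^ 2))⁻¹ • ((2 * (ν * s)) • d s)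
      = (3 / (2 * s)) • d s := by
    rw [smul_smul, ← add_smul]
    congr 1
    have h2s : (2 : F) * s ≠ 0 := mul_ne_zero two_ne_zero hs
    have h2v : (2 : F) * (ν * s ^ 2) ≠ 0 :=
      mul_ne_zero two_ne_zero (mul_ne_zero hν (pow_ne_zero 2 hs))
    field_simp
    ring
  rw [hGsub, hd, e1, e2]
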